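/- For every n ≥ 0 and every real x, ∫_0^∞ L_n(ξ)·e^{−ξ/2 + ixξ} dξ = 2·(−1)^n·(1+2ix)^n/(1−2ix)^{n+1}, where L_n is the n-th (simple) Laguerre polynomial. -/

import Mathlib

open Complex

open MeasureTheory Set Filter

lemma norm_pow_mul_cexp (c : ℂ) (l : ℕ) {t : ℝ} (ht : 0 ≤ t) :
    ‖(t : ℂ) ^ l * Complex.exp (-c * t)‖ = t ^ l * Real.exp (-c.re * t) := by
  have hre : (-c * (t : ℂ)).re = -c.re * t := by simp
  rw [norm_mul, norm_pow, Complex.norm_exp, hre,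
    Complex.norm_real, Real.norm_eq_abs, _root_.abs_of_nonneg ht]

lemma integrableOn_pow_mul_exp_real {b : ℝ} (hb : 0 < b) (l : ℕ) :
    IntegrableOn (fun t : ℝ => t ^ l * Real.exp (-b * t)) (Ioi 0) := by
  have := integrableOn_rpow_mul_exp_neg_mul_rpow (s := (l : ℝ)) (p := 1) (b := b)
    (lt_of_lt_of_le neg_one_lt_zero (Nat.cast_nonneg l)) one_pos hb
  refine this.congr_fun (fun x hx => ?_) measurableSet_Ioi
  simp only [Real.rpow_natCast, Real.rpow_one]

lemma integrableOn_pow_mul_cexp {c : ℂ} (hc : 0 < c.re) (l : ℕ) :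
    IntegrableOn (fun t : ℝ => (t : ℂ) ^ l * Complex.exp (-c * t)) (Ioi 0) := by
  have hcont : Continuous fun t : ℝ => (t : ℂ) ^ l * Complex.exp (-c * t) := by
    continuity
  refine (integrableOn_pow_mul_exp_real hc l).mono' hcont.aestronglyMeasurable ?_
  filter_upwards [ae_restrict_mem measurableSet_Ioi] with t ht
  rw [norm_pow_mul_cexp c l ht.le]

lemma tendsto_pow_mul_cexp {c : ℂ} (hc : 0 < c.re) (l : ℕ) :
    Tendsto (fun t : ℝ => (t : ℂ) ^ l * Complex.exp (-c * t)) atTop (nhds 0) := by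
  have h2 : Tendsto (fun t : ℝ => t ^ l * Real.exp (-c.re * t)) atTop (nhds 0) := by
    have := tendsto_rpow_mul_exp_neg_mul_atTop_nhds_zero (l : ℝ) c.re hc
    refine Tendsto.congr' ?_ this
    filter_upwards [eventually_ge_atTop (0 : ℝ)] with t ht
    rw [Real.rpow_natCast]
  refine squeeze_zero_norm' ?_ h2
  filter_upwards [eventually_ge_atTop (0 : ℝ)] with t ht
  exact le_of_eq (norm_pow_mul_cexp c l ht)

lemma integral_pow_mul_cexp {c : ℂ} (hc : 0 < c.re) (l : ℕ) :
    ∫ t in Ioi (0 : ℝ), (t : ℂ) ^ l * Complex.exp (-c * t)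
      = (Nat.factorial l : ℂ) / c ^ (l + 1) := by
  have hc0 : c ≠ 0 := fun h => by simp [h] at hc
  induction l with
  | zero =>
    have hderiv : ∀ t : ℝ, HasDerivAt (fun t : ℝ => -Complex.exp (-c * t) / c)
        ((t : ℂ) ^ 0 * Complex.exp (-c * t)) t := by
      intro t
      have : HasDerivAt (fun z : ℂ => -Complex.exp (-c * z) / c)
          (Complex.exp (-c * (t : ℂ))) (t : ℂ) := by
        have h1 : HasDerivAt (fun z : ℂ => -c * z) (-c) (t : ℂ) := by
          simpa using (hasDerivAt_id (t : ℂ)).const_mul (-c)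
        have := ((h1.cexp).neg).div_const c
        refine this.congr_deriv ?_
        linear_combination (Complex.exp (-c * (t : ℂ))) * inv_mul_cancel₀ hc0
      simpa using this.comp_ofReal
    have htend : Tendsto (fun t : ℝ => -Complex.exp (-c * t) / c) atTop (nhds 0) := by
      have := ((tendsto_pow_mul_cexp hc 0).neg).div_const c
      simpa using this
    have := integral_Ioi_of_hasDerivAt_of_tendsto' (a := 0)
      (fun t _ => hderiv t) (integrableOn_pow_mul_cexp hc 0) htend
    rw [this]
    simp only [Complex.ofReal_zero, mul_zero, Complex.exp_zero, Nat.factorial_zero,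
      Nat.cast_one, pow_one]
    field_simp
    ring
  | succ l ih =>
    have hderiv : ∀ t : ℝ, HasDerivAt
        (fun t : ℝ => -((t : ℂ) ^ (l + 1) * Complex.exp (-c * t)) / c)
        ((t : ℂ) ^ (l + 1) * Complex.exp (-c * t)
          - ((l : ℂ) + 1) / c * ((t : ℂ) ^ l * Complex.exp (-c * t))) t := by
      intro t
      have key : HasDerivAt (fun z : ℂ => -(z ^ (l + 1) * Complex.exp (-c * z)) / c)
          ((t : ℂ) ^ (l + 1) * Complex.exp (-c * (t : ℂ))
            - ((l : ℂ) + 1) / c * ((t : ℂ) ^ l * Complex.exp (-c * (t : ℂ)))) (t : ℂ) := by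
        have h1 : HasDerivAt (fun z : ℂ => -c * z) (-c) (t : ℂ) := by
          simpa using (hasDerivAt_id (t : ℂ)).const_mul (-c)
        have h2 : HasDerivAt (fun z : ℂ => z ^ (l + 1)) (((l : ℂ) + 1) * (t : ℂ) ^ l) (t : ℂ) := by
          simpa using hasDerivAt_pow (l + 1) (t : ℂ)
        have := ((h2.mul h1.cexp).neg).div_const c
        refine this.congr_deriv ?_
        linear_combination ((t : ℂ) ^ (l + 1) * Complex.exp (-c * (t : ℂ))) * inv_mul_cancel₀ hc0
      simpa using key.comp_ofReal
    have hint1 := integrableOn_pow_mul_cexp hc (l + 1)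
    have hint0 := (integrableOn_pow_mul_cexp hc l).smul (((l : ℂ) + 1) / c)
    have hint : IntegrableOn (fun t : ℝ => (t : ℂ) ^ (l + 1) * Complex.exp (-c * t)
        - ((l : ℂ) + 1) / c * ((t : ℂ) ^ l * Complex.exp (-c * t))) (Ioi 0) := by
      exact hint1.sub (by simpa [Pi.smul_def, smul_eq_mul, IntegrableOn] using hint0)
    have htend : Tendsto (fun t : ℝ => -((t : ℂ) ^ (l + 1) * Complex.exp (-c * t)) / c)
        atTop (nhds 0) := by
      have := ((tendsto_pow_mul_cexp hc (l + 1)).neg).div_const c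
      simpa using this
    have key := integral_Ioi_of_hasDerivAt_of_tendsto' (a := 0)
      (fun t _ => hderiv t) hint htend
    rw [integral_sub hint1 (by simpa [Pi.smul_def, smul_eq_mul] using hint0)] at key
    rw [MeasureTheory.integral_const_mul, ih] at key
    simp only [Complex.ofReal_zero, ne_eq] at key
    have : ∫ t in Ioi (0 : ℝ), (t : ℂ) ^ (l + 1) * Complex.exp (-c * t)
        = ((l : ℂ) + 1) / c * ((Nat.factorial l : ℂ) / c ^ (l + 1)) := by
      linear_combination key
    rw [this, Nat.factorial_succ, div_mul_div_comm, ← pow_succ']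
    push_cast
    ring

/-- The simple Laguerre polynomial `L_n(ξ) = Σ_{ℓ=0}^n (-1)^ℓ C(n,ℓ) ξ^ℓ/ℓ!`. -/
noncomputable def laguerreFn (n : ℕ) (ξ : ℝ) : ℝ :=
  ∑ l ∈ Finset.range (n + 1), (-1) ^ l * (n.choose l : ℝ) * ξ ^ l / (Nat.factorial l : ℝ)

theorem laguerre_laplace (n : ℕ) (x : ℝ) :
    ∫ ξ in Set.Ioi (0 : ℝ), (laguerreFn n ξ : ℂ) * Complex.exp (-ξ / 2 + I * x * ξ)
      = 2 * (-1) ^ n * (1 + 2 * I * x) ^ n / (1 - 2 * I * x) ^ (n + 1) := by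
  set c : ℂ := 1 / 2 - I * x with hc_def
  have hcre : 0 < c.re := by
    rw [hc_def]
    simp [Complex.sub_re, Complex.mul_re]
  have hc0 : c ≠ 0 := fun h => by simp [h] at hcre
  have hfun : ∀ ξ : ℝ, (laguerreFn n ξ : ℂ) * Complex.exp (-ξ / 2 + I * x * ξ)
      = ∑ l ∈ Finset.range (n + 1),
        ((-1) ^ l * (n.choose l : ℂ) / (Nat.factorial l : ℂ))
          * ((ξ : ℂ) ^ l * Complex.exp (-c * ξ)) := by
    intro ξ
    have hexp : Complex.exp (-ξ / 2 + I * x * ξ) = Complex.exp (-c * ξ) := by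
      congr 1
      rw [hc_def]
      push_cast
      ring
    rw [hexp, laguerreFn]
    push_cast
    rw [Finset.sum_mul]
    refine Finset.sum_congr rfl fun l _ => ?_
    ring
  rw [MeasureTheory.setIntegral_congr_fun measurableSet_Ioi (fun ξ _ => hfun ξ),
    MeasureTheory.integral_finset_sum _ (fun l _ =>
      ((integrableOn_pow_mul_cexp hcre l).const_mul _))]
  have hterm : ∀ l ∈ Finset.range (n + 1),
      (∫ ξ in Set.Ioi (0 : ℝ), ((-1) ^ l * (n.choose l : ℂ) / (Nat.factorial l : ℂ))
        * ((ξ : ℂ) ^ l * Complex.exp (-c * ξ)))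
      = (-c⁻¹) ^ l * (1 : ℂ) ^ (n - l) * (n.choose l : ℂ) * c⁻¹ := by
    intro l _
    rw [MeasureTheory.integral_const_mul, integral_pow_mul_cexp hcre l]
    have hfac : (Nat.factorial l : ℂ) ≠ 0 := Nat.cast_ne_zero.mpr l.factorial_ne_zero
    rw [one_pow, mul_one, div_mul_div_comm, mul_comm ((Nat.factorial l : ℂ)) (c ^ (l + 1)),
      mul_div_mul_right _ _ hfac]
    have h : (-c⁻¹ : ℂ) ^ l = (-1) ^ l * (c ^ l)⁻¹ := by rw [neg_pow, inv_pow]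
    rw [h, pow_succ, div_eq_mul_inv, mul_inv]
    ring
  rw [Finset.sum_congr rfl hterm, ← Finset.sum_mul, ← add_pow]
  have h2 : (1 : ℂ) - 2 * I * x = 2 * c := by rw [hc_def]; ring
  have h1 : (-c⁻¹ + 1) = (c - 1) * c⁻¹ := by field_simp; ring
  have h3 : (1 : ℂ) + 2 * I * x = -2 * (c - 1) := by rw [hc_def]; ring
  rw [h1, h2, h3]
  rw [mul_pow (-2 : ℂ) (c - 1), show (2 : ℂ) * (-1) ^ n * ((-2) ^ n * (c - 1) ^ n)
      = 2 * 2 ^ n * (c - 1) ^ n from by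
        rw [mul_assoc 2, ← mul_assoc ((-1 : ℂ) ^ n), ← mul_pow]; norm_num [mul_assoc]]
  rw [mul_pow (c - 1) c⁻¹, mul_pow 2 c]
  field_simp
  have hcc : c ^ n * c⁻¹ ^ n = 1 := by rw [← mul_pow, mul_inv_cancel₀ hc0, one_pow]
  linear_combination (c * (-1 + c) ^ n * 2 ^ n * 2) * hcc
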